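/- arXiv:1310.6699 — 5 statements merged into one kernel-verified Lean document; each statement's English description precedes it below -/
import Mathlib

section
/- For λ ∈ ℂ and k ≥ 1, let C_k(λ) be the 2k×2k real block matrix with k diagonal blocks C(λ) = [[Re λ, Im λ], [−Im λ, Re λ]] and 2×2 identity blocks on the first block superdiagonal. Let S_k be the block-diagonal matrix with k copies of S = [[−i, −i], [1, −1]]. Then S_k⁻¹·C_k(λ)·S_k equals the block matrix D_k(λ) with diagonal blocks diag(λ, conj(λ)) and identity blocks on the first block superdiagonal. -/
/-- The 2×2 block `C(λ) = [[Re λ, Im λ], [−Im λ, Re λ]]` (viewed in `ℂ`). -/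
def Cblk (z : ℂ) : Matrix (Fin 2) (Fin 2) ℂ :=
  !![(z.re : ℂ), (z.im : ℂ); -(z.im : ℂ), (z.re : ℂ)]

/-- `S = [[−i, −i], [1, −1]]`. -/
def Smat : Matrix (Fin 2) (Fin 2) ℂ := !![-Complex.I, -Complex.I; 1, -1]

/-- The real Jordan block `C_k(λ)`: `k` diagonal blocks `C(λ)` and `I₂` on the
first block superdiagonal (rows/columns indexed by `Fin k × Fin 2`). -/
def Ck (k : ℕ) (z : ℂ) : Matrix (Fin k × Fin 2) (Fin k × Fin 2) ℂ :=
  Matrix.of fun p q =>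
    if p.1 = q.1 then Cblk z p.2 q.2
    else if (p.1 : ℕ) + 1 = (q.1 : ℕ) then (1 : Matrix (Fin 2) (Fin 2) ℂ) p.2 q.2
    else 0

/-- `S_k = ⊕_{i=1}^k S`. -/
def Sk (k : ℕ) : Matrix (Fin k × Fin 2) (Fin k × Fin 2) ℂ :=
  Matrix.of fun p q => if p.1 = q.1 then Smat p.2 q.2 else 0

/-- The 2×2 block `D(λ) = diag(λ, conj λ)`. -/
def Dblk (z : ℂ) : Matrix (Fin 2) (Fin 2) ℂ := !![z, 0; 0, starRingEnd ℂ z]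

/-- `D_k(λ)`: diagonal blocks `diag(λ, conj λ)` and `I₂` on the superdiagonal. -/
def Dk (k : ℕ) (z : ℂ) : Matrix (Fin k × Fin 2) (Fin k × Fin 2) ℂ :=
  Matrix.of fun p q =>
    if p.1 = q.1 then Dblk z p.2 q.2
    else if (p.1 : ℕ) + 1 = (q.1 : ℕ) then (1 : Matrix (Fin 2) (Fin 2) ℂ) p.2 q.2
    else 0


noncomputable def SmatInv : Matrix (Fin 2) (Fin 2) ℂ := !![Complex.I/2, 1/2; Complex.I/2, -1/2]

noncomputable def SkInv (k : ℕ) : Matrix (Fin k × Fin 2) (Fin k × Fin 2) ℂ :=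
  Matrix.of fun p q => if p.1 = q.1 then SmatInv p.2 q.2 else 0

lemma Sk_mul_SkInv (k : ℕ) : Sk k * SkInv k = 1 := by
  ext ⟨i, a⟩ ⟨j, b⟩
  simp only [Matrix.mul_apply, Fintype.sum_prod_type, Sk, SkInv, Matrix.of_apply,
    Matrix.one_apply, Prod.mk.injEq, ite_mul, zero_mul]
  rcases eq_or_ne i j with rfl | h
  · simp only [if_pos rfl, eq_self_iff_true, true_and]
    rw [Finset.sum_eq_single i (by intro r _ hr; simp [hr.symm]) (by simp)]
    simp only [if_pos rfl]
    fin_cases a <;> fin_cases b <;>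
      simp [Fin.sum_univ_two, Smat, SmatInv, Complex.ext_iff] <;> ring_nf
  · simp [h]

lemma key (k : ℕ) (z : ℂ) : Ck k z * Sk k = Sk k * Dk k z := by
  ext ⟨i, a⟩ ⟨j, b⟩
  simp only [Matrix.mul_apply, Fintype.sum_prod_type, Ck, Sk, Dk, Matrix.of_apply,
    mul_ite, mul_zero, ite_mul, zero_mul]
  rw [Finset.sum_eq_single j (by intro r _ hr; simp [hr]) (by simp),
      Finset.sum_eq_single i (by intro r _ hr; simp [Ne.symm hr]) (by simp)]
  simp only [if_pos rfl]
  rcases eq_or_ne i j with rfl | h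
  · simp only [if_pos rfl]
    fin_cases a <;> fin_cases b <;>
      simp [Fin.sum_univ_two, Smat, Cblk, Dblk, Complex.ext_iff, Complex.conj_re,
        Complex.conj_im]
  · simp only [if_neg h]
    rcases eq_or_ne ((i:ℕ)+1) (j:ℕ) with h1 | h1
    · simp only [if_pos h1]
      fin_cases a <;> fin_cases b <;>
        simp [Fin.sum_univ_two, Smat, Matrix.one_apply]
    · simp [h1]

/-- `S_k⁻¹ · C_k(λ) · S_k = D_k(λ)`. -/
theorem stmt_5 (k : ℕ) (hk : 1 ≤ k) (z : ℂ) :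
    (Sk k)⁻¹ * Ck k z * Sk k = Dk k z := by
  have hinv : (Sk k)⁻¹ = SkInv k := Matrix.inv_eq_right_inv (Sk_mul_SkInv k)
  have hleft : SkInv k * Sk k = 1 := by
    have := mul_eq_one_comm.mp (Sk_mul_SkInv k)
    exact this
  calc (Sk k)⁻¹ * Ck k z * Sk k = SkInv k * (Ck k z * Sk k) := by rw [hinv, Matrix.mul_assoc]
    _ = SkInv k * (Sk k * Dk k z) := by rw [key]
    _ = Dk k z := by rw [← Matrix.mul_assoc, hleft, Matrix.one_mul]
end

section
/- If λ < 0 is a negative real number and J_k(λ) is the k×k Jordan block, then the 2k×2k matrix J_k(λ) ⊕ J_k(λ) is similar via a permutation matrix to C_k(λ): specifically, P_k·(J_k(λ) ⊕ J_k(λ))·P_kᵀ = C_k(λ), where C_k(λ) for real λ has diagonal blocks λ·I₂ and identity superdiagonal blocks. -/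
open Matrix

/-- The `k×k` real Jordan block `J_k(λ)`. -/
def JordanBlockR (k : ℕ) (lam : ℝ) : Matrix (Fin k) (Fin k) ℝ :=
  Matrix.of fun i j => if i = j then lam else if (i : ℕ) + 1 = (j : ℕ) then 1 else 0

/-- For real `λ`, `C(λ) = λ·I₂`, so `C_k(λ)` has diagonal blocks `λ·I₂` and `I₂`
on the first block superdiagonal. -/
def CkR (k : ℕ) (lam : ℝ) : Matrix (Fin k × Fin 2) (Fin k × Fin 2) ℝ :=
  Matrix.of fun p q =>
    if p.1 = q.1 then (if p.2 = q.2 then lam else 0)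
    else if (p.1 : ℕ) + 1 = (q.1 : ℕ) then (if p.2 = q.2 then 1 else 0)
    else 0

/-- The perfect-shuffle permutation matrix `P_k` with columns
`e₁, e₃, …, e_{2k−1}, e₂, e₄, …, e_{2k}`. -/
def PmatR (k : ℕ) : Matrix (Fin k × Fin 2) (Fin k ⊕ Fin k) ℝ :=
  Matrix.of fun p q =>
    match q with
    | Sum.inl i => if p = (i, 0) then 1 else 0
    | Sum.inr i => if p = (i, 1) then 1 else 0

lemma key_s8 (k : ℕ) (lam : ℝ) (i j : Fin k) :
    (∑ x : Fin k, if x = j then (if i = x then lam else 0)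
        else if (x : ℕ) + 1 = (j : ℕ) then (if i = x then 1 else 0) else 0) =
      if i = j then lam else if (i : ℕ) + 1 = (j : ℕ) then 1 else 0 := by
  rw [Finset.sum_eq_single i]
  · by_cases h : i = j <;> simp [h]
  · intro x _ hx
    simp [Ne.symm hx]
  · simp

/-- for a negative real eigenvalue `λ`,
`P_k·(J_k(λ) ⊕ J_k(λ))·P_kᵀ = C_k(λ)`. -/
theorem stmt_8 (k : ℕ) (lam : ℝ) (hlam : lam < 0) :
    PmatR k * Matrix.fromBlocks (JordanBlockR k lam) 0 0 (JordanBlockR k lam) * (PmatR k)ᵀ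
      = CkR k lam := by
  ext ⟨i, a⟩ ⟨j, b⟩
  simp only [mul_apply, transpose_apply, PmatR, JordanBlockR, CkR, of_apply,
    Fintype.sum_sum_type, fromBlocks_apply₁₁, fromBlocks_apply₁₂, fromBlocks_apply₂₁,
    fromBlocks_apply₂₂, Matrix.zero_apply]
  fin_cases a <;> fin_cases b <;>
      simp [Finset.sum_ite_eq', Prod.ext_iff, mul_comm] <;>
    exact key_s8 k lam i j
end

section
/- If A is a nonsingular real n×n matrix with at least one negative real eigenvalue appearing in an odd number of Jordan blocks of some size, and p is even, then A has no real primary pth-root; in particular, a nonsingular real matrix with a simple negative eigenvalue has no real primary pth-root when p is even. -/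
open Polynomial Matrix

set_option maxHeartbeats 1000000

private lemma evenB : ∀ N : ℕ, ∀ P : Polynomial ℝ, P.natDegree ≤ N → P ≠ 0 →
    (∀ x : ℝ, ¬ P.IsRoot x) → Even P.natDegree := by
  intro N
  induction N with
  | zero => intro P h _ _; simp [Nat.le_zero.mp h]
  | succ N ih =>
    intro P hle h0 hroot
    rcases Nat.eq_zero_or_pos P.natDegree with h | hpos
    · simp [h]
    have hnu : ¬ IsUnit P := fun hu => by
      simp [Polynomial.natDegree_eq_zero_of_isUnit hu] at hpos
    obtain ⟨q, hqirr, hqdvd⟩ := WfDvdMonoid.exists_irreducible_factor hnu h0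
    obtain ⟨r, hr⟩ := hqdvd
    have hq0 : q ≠ 0 := hqirr.ne_zero
    have hr0 : r ≠ 0 := fun h => by simp [hr, h] at h0
    have hqroot : ∀ x : ℝ, ¬ q.IsRoot x := fun x hx =>
      hroot x (by simp [hr, IsRoot, hx.eq_zero])
    have hq1 : q.natDegree ≠ 1 := by
      intro h1
      obtain ⟨a, b, hab⟩ := Polynomial.exists_eq_X_add_C_of_natDegree_le_one h1.le
      have ha : a ≠ 0 := by
        intro ha; rw [ha] at hab; simp [hab] at h1
      apply hqroot (-b / a)
      simp only [hab, IsRoot, eval_add, eval_mul, eval_C, eval_X]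
      field_simp
      ring
    have hne0 : q.natDegree ≠ 0 := by
      intro h0'
      have hqc : q = C (q.coeff 0) := Polynomial.eq_C_of_natDegree_eq_zero h0'
      have hc : q.coeff 0 ≠ 0 := fun hc => hq0 (by rw [hqc, hc, map_zero])
      exact hqirr.not_isUnit (hqc ▸ (Polynomial.isUnit_C).2 (isUnit_iff_ne_zero.2 hc))
    have hq2 : q.natDegree = 2 := by
      have := hqirr.natDegree_le_two; omega
    have hdeg : P.natDegree = 2 + r.natDegree := by
      rw [hr, Polynomial.natDegree_mul hq0 hr0, hq2]
    have hrroot : ∀ x : ℝ, ¬ r.IsRoot x := fun x hx =>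
      hroot x (by simp [hr, IsRoot, hx.eq_zero])
    have hre : Even r.natDegree := ih r (by omega) hr0 hrroot
    rw [hdeg]
    exact even_two.add hre

private lemma aeval_mulVec {d : ℕ} (M : Matrix (Fin d) (Fin d) ℝ) {v : Fin d → ℝ} {x : ℝ}
    (hv : M.mulVec v = x • v) (q : Polynomial ℝ) :
    (aeval M q).mulVec v = q.eval x • v := by
  induction q using Polynomial.induction_on with
  | C a => simp [Algebra.algebraMap_eq_smul_one, Matrix.smul_mulVec, Matrix.one_mulVec,
      smul_smul]
  | add p q hp hq => simp [Matrix.add_mulVec, hp, hq, add_smul]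
  | monomial k a hk =>
    have h1 : (aeval M (C a * X ^ (k+1))) = (aeval M (C a * X ^ k)) * M := by
      simp [pow_succ, mul_assoc]
    rw [h1, ← Matrix.mulVec_mulVec, hv, Matrix.mulVec_smul, hk, smul_smul]
    congr 1
    simp [pow_succ]
    ring

private lemma eval_charpoly' {d : ℕ} (M : Matrix (Fin d) (Fin d) ℝ) (x : ℝ) :
    M.charpoly.eval x = (x • (1 : Matrix (Fin d) (Fin d) ℝ) - M).det := by
  rw [Matrix.charpoly, ← Polynomial.coe_evalRingHom, RingHom.map_det]
  congr 1
  ext i j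
  by_cases h : i = j <;>
    simp [h, Matrix.charmatrix_apply, RingHom.mapMatrix_apply, Matrix.one_apply,
      Matrix.smul_apply]

private lemma evenA {d : ℕ} (M : Matrix (Fin d) (Fin d) ℝ) (g : Polynomial ℝ)
    (hg : ∀ x : ℝ, g.eval x ≠ 0) (hMg : aeval M g = 0) : Even d := by
  have hroot : ∀ x : ℝ, ¬ M.charpoly.IsRoot x := by
    intro x hx
    rw [IsRoot, eval_charpoly'] at hx
    obtain ⟨v, hv0, hv⟩ := (Matrix.exists_mulVec_eq_zero_iff).2 hx
    have hxv : M.mulVec v = x • v := by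
      rw [Matrix.sub_mulVec, sub_eq_zero] at hv
      rw [← hv, Matrix.smul_mulVec, Matrix.one_mulVec]
    have h2 := aeval_mulVec M hxv g
    rw [hMg] at h2
    simp only [Matrix.zero_mulVec] at h2
    rcases smul_eq_zero.mp h2.symm with h | h
    · exact hg x h
    · exact hv0 h
  have hdeg : M.charpoly.natDegree = d := by
    simpa using M.charpoly_natDegree_eq_dim
  exact hdeg ▸ evenB M.charpoly.natDegree M.charpoly le_rfl M.charpoly_monic.ne_zero hroot

private lemma evenV {n : ℕ} (Y : Matrix (Fin n) (Fin n) ℝ) (g : Polynomial ℝ)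
    (hg : ∀ x : ℝ, g.eval x ≠ 0) :
    Even (Module.finrank ℝ (LinearMap.ker (aeval Y g).mulVecLin)) := by
  set B : Matrix (Fin n) (Fin n) ℝ := aeval Y g with hB
  set V := LinearMap.ker B.mulVecLin with hV
  have hcomm : Y * B = B * Y := by
    rw [hB]
    have h := congrArg (aeval Y) (mul_comm X g)
    simpa [_root_.map_mul] using h
  have hinv : ∀ v ∈ V, Y.mulVecLin v ∈ V := by
    intro v hv
    simp only [hV, LinearMap.mem_ker, Matrix.mulVecLin_apply] at hv ⊢
    rw [Matrix.mulVec_mulVec, ← hcomm, ← Matrix.mulVec_mulVec, hv, Matrix.mulVec_zero]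
  set f' : Module.End ℝ V := (Y.mulVecLin).restrict hinv with hf'
  have key : ∀ (q : Polynomial ℝ) (v : V), ((aeval f' q v : V) : Fin n → ℝ)
      = (aeval Y q).mulVec v.val := by
    intro q
    induction q using Polynomial.induction_on with
    | C a => intro v; simp [Algebra.algebraMap_eq_smul_one, Matrix.smul_mulVec,
        Matrix.one_mulVec]
    | add p q hp hq => intro v; simp [Matrix.add_mulVec, hp, hq]
    | monomial k a hk =>
      intro v
      have h1 : aeval f' (C a * X ^ (k+1)) = aeval f' (C a * X ^ k) * f' := by
        simp [pow_succ, mul_assoc]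
      have h2 : aeval Y (C a * X ^ (k+1)) = aeval Y (C a * X ^ k) * Y := by
        simp [pow_succ, mul_assoc]
      rw [h1, h2, Module.End.mul_apply, hk, LinearMap.restrict_apply, ← Matrix.mulVec_mulVec]
      rfl
  have haf : aeval f' g = 0 := by
    ext v
    rw [key g v]
    have hv : B.mulVec v.val = 0 := v.2
    simp [← hB, hv]
  let b := Module.finBasis ℝ V
  have hM : aeval (LinearMap.toMatrixAlgEquiv b f') g = 0 := by
    rw [show (LinearMap.toMatrixAlgEquiv b) f' = (LinearMap.toMatrixAlgEquiv b).toAlgHom f' from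
      rfl, Polynomial.aeval_algHom_apply, haf, map_zero]
  exact evenA _ g hg hM

private lemma finrank_ker_map {n : ℕ} (B : Matrix (Fin n) (Fin n) ℝ) :
    Module.finrank ℂ (LinearMap.ker (B.map (Complex.ofReal)).mulVecLin)
      = Module.finrank ℝ (LinearMap.ker B.mulVecLin) := by
  set K := LinearMap.ker B.mulVecLin with hK
  set Kc := LinearMap.ker ((B.map (Complex.ofReal)).mulVecLin) with hKc
  have memKc : ∀ v : Fin n → ℂ, v ∈ Kc ↔
      (fun i => (v i).re) ∈ K ∧ (fun i => (v i).im) ∈ K := by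
    intro v
    constructor
    · intro hv
      have hv' : ∀ j, ∑ k, (B j k : ℂ) * v k = 0 := by
        intro j
        have := congrFun (LinearMap.mem_ker.mp hv) j
        simpa [Matrix.mulVecLin_apply, Matrix.mulVec, dotProduct,
          Matrix.map_apply] using this
      constructor <;>
      · refine LinearMap.mem_ker.mpr (funext fun j => ?_)
        have h1 := congrArg Complex.re (hv' j)
        have h2 := congrArg Complex.im (hv' j)
        simp only [Complex.re_sum, Complex.im_sum, Complex.mul_re, Complex.mul_im,
          Complex.ofReal_re, Complex.ofReal_im, zero_mul, sub_zero, zero_add,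
          Complex.zero_re, Complex.zero_im] at h1 h2
        simpa [Matrix.mulVecLin_apply, Matrix.mulVec, dotProduct] using (by
          first
          | (exact h1)
          | (simpa using h2))
    · rintro ⟨h1, h2⟩
      refine LinearMap.mem_ker.mpr (funext fun j => ?_)
      have ha := congrFun (LinearMap.mem_ker.mp h1) j
      have hb := congrFun (LinearMap.mem_ker.mp h2) j
      simp only [Matrix.mulVecLin_apply, Matrix.mulVec, dotProduct, Pi.zero_apply] at ha hb ⊢
      have : ∀ k, (B j k : ℂ) * v k
          = ((B j k * (v k).re : ℝ) : ℂ) + ((B j k * (v k).im : ℝ) : ℂ) * Complex.I := by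
        intro k
        rw [← Complex.re_add_im (v k)]
        simp only [Complex.add_re, Complex.add_im, Complex.ofReal_re, Complex.ofReal_im,
          Complex.mul_re, Complex.mul_im, Complex.I_re, Complex.I_im]
        push_cast
        ring
      simp only [Matrix.map_apply, this]
      rw [Finset.sum_add_distrib, ← Finset.sum_mul, ← Complex.ofReal_sum, ← Complex.ofReal_sum,
        ha, hb]
      simp
  let e : (K × K) ≃ₗ[ℝ] (Kc.restrictScalars ℝ) :=
    { toFun := fun ab => ⟨fun i => (ab.1.val i : ℂ) + (ab.2.val i : ℂ) * Complex.I, by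
        rw [Submodule.restrictScalars_mem, memKc]
        constructor <;> simp [ab.1.2, ab.2.2]⟩
      map_add' := by
        intro x y
        ext i
        push_cast
        simp
        ring
      map_smul' := by
        intro r x
        ext i
        push_cast
        simp [Complex.real_smul]
        ring
      invFun := fun v => (⟨fun i => (v.val i).re, ((memKc v.val).mp v.2).1⟩,
                          ⟨fun i => (v.val i).im, ((memKc v.val).mp v.2).2⟩)
      left_inv := by
        intro ab
        ext i <;> simp
      right_inv := by
        intro v
        ext i
        simp [Complex.re_add_im] }
  have h1 : Module.finrank ℝ (K × K) = Module.finrank ℝ (Kc.restrictScalars ℝ) := e.finrank_eq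
  rw [Module.finrank_prod] at h1
  have h2 : Module.finrank ℝ (Kc.restrictScalars ℝ) = 2 * Module.finrank ℂ Kc :=
    finrank_real_of_complex _
  omega

/-- if the nonsingular real matrix `A` has a negative real
eigenvalue `λ` appearing in an odd number of Jordan blocks of some size `m`
(the number of Jordan blocks of size `m` for `λ` being
`rank N^{m−1} + rank N^{m+1} − 2·rank N^m` where `N = A − λI` over `ℂ`),
and `p` is even, then `A` has no real primary `p`th-root, i.e. no real `p`th-root
expressible as a polynomial in `A`.  (In particular this applies when `λ` is a
simple negative eigenvalue, which occurs in exactly one Jordan block, of size 1.) -/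
theorem stmt_10 (n p : ℕ) (hp : Even p) (hp1 : 0 < p)
    (A : Matrix (Fin n) (Fin n) ℝ) (hA : IsUnit A)
    (lam : ℝ) (hlam : lam < 0) (m : ℕ) (hm : 1 ≤ m)
    (hodd : Odd
      (((((A.map (Complex.ofReal)) - (lam : ℂ) • 1) ^ (m - 1)).rank : ℤ)
        + ((((A.map (Complex.ofReal)) - (lam : ℂ) • 1) ^ (m + 1)).rank : ℤ)
        - 2 * ((((A.map (Complex.ofReal)) - (lam : ℂ) • 1) ^ m).rank : ℤ))) :
    ¬ ∃ (X : Matrix (Fin n) (Fin n) ℝ) (q : Polynomial ℂ),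
        X.map (Complex.ofReal) = Polynomial.aeval (A.map (Complex.ofReal)) q ∧ X ^ p = A := by
  rintro ⟨Y, q, hq, hYp⟩
  -- the real matrices `(A - lam • 1)^j` and their polynomials
  set g : ℕ → Polynomial ℝ := fun j => ((X : Polynomial ℝ) ^ p - C lam) ^ j with hg
  have hgroot : ∀ j, ∀ x : ℝ, (g j).eval x ≠ 0 := by
    intro j x
    have hx : x ^ p - lam ≠ 0 := by
      have h1 : (0:ℝ) ≤ x ^ p := hp.pow_nonneg x
      nlinarith
    simp [hg, sub_ne_zero, pow_ne_zero, hx]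
  have haeval : ∀ j, aeval Y (g j) = (A - lam • 1) ^ j := by
    intro j
    rw [hg]
    simp only [map_pow, map_sub, aeval_X_pow, aeval_X, aeval_C,
      Algebra.algebraMap_eq_smul_one]
    rw [hYp]
  -- complexification
  have hmap : ∀ j : ℕ, ((A.map (Complex.ofReal)) - (lam : ℂ) • 1) ^ j
      = ((A - lam • 1) ^ j).map (Complex.ofReal) := by
    intro j
    have hbase : (A.map (Complex.ofReal)) - (lam : ℂ) • 1 = (A - lam • 1).map (Complex.ofReal) := by
      ext i k
      by_cases h : i = k <;>
        simp [h, Matrix.map_apply, Matrix.sub_apply, Matrix.smul_apply, Matrix.one_apply]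
    rw [hbase]
    induction j with
    | zero =>
      ext i k
      by_cases h : i = k <;> simp [h, Matrix.map_apply, Matrix.one_apply]
    | succ j ih =>
      rw [pow_succ, pow_succ, ih]
      ext i k
      simp only [Matrix.map_apply, Matrix.mul_apply]
      push_cast
      rfl
  -- evenness of kernels
  have heven : ∀ j : ℕ, Even (Module.finrank ℂ
      (LinearMap.ker ((((A.map (Complex.ofReal)) - (lam : ℂ) • 1) ^ j).mulVecLin))) := by
    intro j
    rw [hmap j, finrank_ker_map, ← haeval j]
    exact evenV Y (g j) (hgroot j)
  -- rank-nullity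
  have hrn : ∀ j : ℕ, (((A.map (Complex.ofReal)) - (lam : ℂ) • 1) ^ j).rank
      + Module.finrank ℂ
        (LinearMap.ker ((((A.map (Complex.ofReal)) - (lam : ℂ) • 1) ^ j).mulVecLin)) = n := by
    intro j
    have := LinearMap.finrank_range_add_finrank_ker
      ((((A.map (Complex.ofReal)) - (lam : ℂ) • 1) ^ j).mulVecLin)
    rw [Matrix.rank]
    simpa using this
  obtain ⟨k1, hk1⟩ := heven (m - 1)
  obtain ⟨k2, hk2⟩ := heven (m + 1)
  have h1 := hrn (m - 1)
  have h2 := hrn (m + 1)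
  have h3 := hrn m
  obtain ⟨t, ht⟩ := hodd
  rw [hk1] at h1
  rw [hk2] at h2
  have h1' : ((((A.map (Complex.ofReal)) - (lam : ℂ) • 1) ^ (m - 1)).rank : ℤ) + (k1 + k1) = n := by
    exact_mod_cast congrArg (Nat.cast : ℕ → ℤ) h1
  have h2' : ((((A.map (Complex.ofReal)) - (lam : ℂ) • 1) ^ (m + 1)).rank : ℤ) + (k2 + k2) = n := by
    exact_mod_cast congrArg (Nat.cast : ℕ → ℤ) h2
  have h3' : ((((A.map (Complex.ofReal)) - (lam : ℂ) • 1) ^ m).rank : ℤ)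
      + (Module.finrank ℂ
        (LinearMap.ker ((((A.map (Complex.ofReal)) - (lam : ℂ) • 1) ^ m).mulVecLin)) : ℤ) = n := by
    exact_mod_cast congrArg (Nat.cast : ℕ → ℤ) h3
  omega
end

section
/- If A is an eventually positive real matrix and X is a real matrix with X^p = A such that X has the strong Perron-Frobenius property and Xᵀ has the strong Perron-Frobenius property, then X is eventually positive. -/
open Matrix Finset

/-- `A` is eventually positive. -/
def EvPos {n : ℕ} (A : Matrix (Fin n) (Fin n) ℝ) : Prop :=
  ∃ N : ℕ, ∀ k, N ≤ k → ∀ i j, 0 < (A ^ k) i j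

/-- Strong Perron-Frobenius property. -/
def StrongPF {n : ℕ} (A : Matrix (Fin n) (Fin n) ℝ) : Prop :=
  ∃ ρ : ℝ, 0 < ρ ∧
    (Matrix.charpoly A).rootMultiplicity ρ = 1 ∧
    (∀ μ : ℂ, μ ∈ spectrum ℂ (A.map Complex.ofReal) → μ ≠ (ρ : ℂ) → ‖μ‖ < ρ) ∧
    ∃ v : Fin n → ℝ, (∀ i, 0 < v i) ∧ A.mulVec v = ρ • v

open Matrix Finset

lemma pow_mulVec_eig {n : ℕ} (X : Matrix (Fin n) (Fin n) ℝ) (v : Fin n → ℝ) (ρ : ℝ)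
    (h : X.mulVec v = ρ • v) (k : ℕ) : (X ^ k).mulVec v = ρ ^ k • v := by
  induction k with
  | zero => simp
  | succ k ih =>
    rw [pow_succ', ← Matrix.mulVec_mulVec, ih, Matrix.mulVec_smul, h, smul_smul, ← pow_succ]

lemma core {n : ℕ} (hn : 0 < n) (C : Matrix (Fin n) (Fin n) ℝ) (v : Fin n → ℝ)
    (hC : ∀ i j, 0 < C i j) (hv : ∀ i, 0 < v i) (hCv : C.mulVec v = v)
    (a : Fin n → ℝ) (j : Fin n) (S : ℝ) (hS : 0 < S) (hsum : ∑ l, a l * v l = S) :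
    ∃ M : ℕ, ∀ m, M ≤ m → 0 < ∑ l, a l * (C ^ m) l j := by
  haveI : NeZero n := ⟨hn.ne'⟩
  have hne : (Finset.univ : Finset (Fin n)).Nonempty := univ_nonempty
  have hne2 : (Finset.univ : Finset (Fin n × Fin n)).Nonempty := univ_nonempty
  set P : Fin n → Fin n → ℝ := fun i l => C i l * v l / v i with hPdef
  have hP0 : ∀ i l, 0 < P i l := fun i l => by
    have := hC i l; have := hv l; have := hv i; positivity
  have hP1 : ∀ i, ∑ l, P i l = 1 := by
    intro i
    have h1 : ∑ l, C i l * v l = v i := by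
      have := congrFun hCv i
      simpa [Matrix.mulVec, dotProduct] using this
    rw [hPdef]
    simp only
    rw [← Finset.sum_div, h1, div_self (hv i).ne']
  set f : ℕ → Fin n → ℝ := fun m l => (C ^ m) l j / v l with hfdef
  have hrec : ∀ m i, f (m + 1) i = ∑ l, P i l * f m l := by
    intro m i
    have h1 : (C ^ (m + 1)) i j = ∑ l, C i l * (C ^ m) l j := by
      rw [pow_succ', Matrix.mul_apply]
    rw [hfdef]; simp only [h1, Finset.sum_div]
    refine Finset.sum_congr rfl fun l _ => ?_
    rw [hPdef]; simp only
    rw [div_mul_div_comm, div_eq_div_iff (hv i).ne' (mul_pos (hv i) (hv l)).ne']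
    ring
  -- lower bound
  set c : ℝ := Finset.univ.inf' hne (f 1) with hcdef
  have hc : 0 < c := by
    rw [hcdef, Finset.lt_inf'_iff]
    intro l _
    have : f 1 l = (C ^ 1) l j / v l := rfl
    rw [this, pow_one]
    exact div_pos (hC l j) (hv l)
  have hlow : ∀ m, 1 ≤ m → ∀ l, c ≤ f m l := by
    intro m hm
    induction m, hm using Nat.le_induction with
    | base => exact fun l => Finset.inf'_le _ (mem_univ l)
    | succ m hm ih =>
      intro i
      rw [hrec]
      calc c = ∑ l, P i l * c := by rw [← Finset.sum_mul, hP1, one_mul]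
        _ ≤ ∑ l, P i l * f m l :=
          Finset.sum_le_sum fun l _ => mul_le_mul_of_nonneg_left (ih l) (hP0 i l).le
  -- oscillation
  set δ : ℝ := Finset.univ.inf' hne2 (fun t : Fin n × Fin n => P t.1 t.2) with hδdef
  have hδ : 0 < δ := by
    rw [hδdef, Finset.lt_inf'_iff]; exact fun t _ => hP0 t.1 t.2
  have hδle : ∀ i l, δ ≤ P i l := fun i l => Finset.inf'_le _ (mem_univ (i, l))
  set Mx : ℕ → ℝ := fun m => Finset.univ.sup' hne (f m) with hMxdef
  set mn : ℕ → ℝ := fun m => Finset.univ.inf' hne (f m) with hmndef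
  have hfle : ∀ m l, f m l ≤ Mx m := fun m l => Finset.le_sup' _ (mem_univ l)
  have hlef : ∀ m l, mn m ≤ f m l := fun m l => Finset.inf'_le _ (mem_univ l)
  have hmM : ∀ m, mn m ≤ Mx m := fun m => (hlef m ⟨0, hn⟩).trans (hfle m _)
  set q : ℝ := max (1 - 2 * δ) 0 with hqdef
  have hq0 : 0 ≤ q := le_max_right _ _
  have hq1 : q < 1 := max_lt (by linarith) one_pos
  have step : ∀ m, Mx (m + 1) - mn (m + 1) ≤ q * (Mx m - mn m) := by
    intro m
    obtain ⟨lmin, -, hlmin⟩ := Finset.exists_mem_eq_inf' hne (f m)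
    obtain ⟨lmax, -, hlmax⟩ := Finset.exists_mem_eq_sup' hne (f m)
    have hlmin' : mn m = f m lmin := hlmin
    have hlmax' : Mx m = f m lmax := hlmax
    have hub : ∀ i, f (m + 1) i ≤ Mx m - δ * (Mx m - mn m) := by
      intro i
      have e1 : ∑ l, P i l * (Mx m - f m l) = Mx m - ∑ l, P i l * f m l := by
        have e0 : ∑ l, P i l * (Mx m - f m l)
            = (∑ l, P i l * Mx m) - ∑ l, P i l * f m l := by
          rw [← Finset.sum_sub_distrib]
          exact Finset.sum_congr rfl fun l _ => by ring
        rw [e0, ← Finset.sum_mul, hP1, one_mul]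
      have e2 : δ * (Mx m - mn m) ≤ ∑ l, P i l * (Mx m - f m l) := by
        calc δ * (Mx m - mn m) ≤ P i lmin * (Mx m - mn m) :=
              mul_le_mul_of_nonneg_right (hδle i lmin) (by linarith [hmM m, hlmin', hlmax'])
          _ = P i lmin * (Mx m - f m lmin) := by rw [← hlmin']
          _ ≤ ∑ l, P i l * (Mx m - f m l) :=
              Finset.single_le_sum (f := fun l => P i l * (Mx m - f m l))
                (fun l _ => mul_nonneg (hP0 i l).le (by linarith [hfle m l])) (mem_univ lmin)
      rw [hrec]
      linarith
    have hlb : ∀ i, mn m + δ * (Mx m - mn m) ≤ f (m + 1) i := by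
      intro i
      have e1 : ∑ l, P i l * (f m l - mn m) = (∑ l, P i l * f m l) - mn m := by
        have e0 : ∑ l, P i l * (f m l - mn m)
            = (∑ l, P i l * f m l) - ∑ l, P i l * mn m := by
          rw [← Finset.sum_sub_distrib]
          exact Finset.sum_congr rfl fun l _ => by ring
        rw [e0, ← Finset.sum_mul, hP1, one_mul]
      have e2 : δ * (Mx m - mn m) ≤ ∑ l, P i l * (f m l - mn m) := by
        calc δ * (Mx m - mn m) ≤ P i lmax * (Mx m - mn m) :=
              mul_le_mul_of_nonneg_right (hδle i lmax) (by linarith [hmM m, hlmin', hlmax'])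
          _ = P i lmax * (f m lmax - mn m) := by rw [← hlmax']
          _ ≤ ∑ l, P i l * (f m l - mn m) :=
              Finset.single_le_sum (f := fun l => P i l * (f m l - mn m))
                (fun l _ => mul_nonneg (hP0 i l).le (by linarith [hlef m l])) (mem_univ lmax)
      rw [hrec]
      linarith
    have hMx1 : Mx (m + 1) ≤ Mx m - δ * (Mx m - mn m) :=
      Finset.sup'_le _ _ fun i _ => hub i
    have hmn1 : mn m + δ * (Mx m - mn m) ≤ mn (m + 1) :=
      Finset.le_inf' _ _ fun i _ => hlb i
    have h12 : (1 - 2 * δ) * (Mx m - mn m) ≤ q * (Mx m - mn m) :=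
      mul_le_mul_of_nonneg_right (le_max_left _ _) (by linarith [hmM m])
    nlinarith
  have hosc : ∀ s, Mx (s + 1) - mn (s + 1) ≤ q ^ s * (Mx 1 - mn 1) := by
    intro s
    induction s with
    | zero => simp
    | succ s ih =>
      calc Mx (s + 2) - mn (s + 2) ≤ q * (Mx (s + 1) - mn (s + 1)) := step (s + 1)
        _ ≤ q * (q ^ s * (Mx 1 - mn 1)) := mul_le_mul_of_nonneg_left ih hq0
        _ = q ^ (s + 1) * (Mx 1 - mn 1) := by ring
  -- conclusion
  set E : ℝ := Mx 1 - mn 1 with hEdef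
  have hE0 : 0 ≤ E := by have := hmM 1; linarith
  set T : ℝ := ∑ l, |a l| * v l with hTdef
  have hT0 : 0 ≤ T :=
    Finset.sum_nonneg fun l _ => mul_nonneg (abs_nonneg _) (hv l).le
  have hε : 0 < S * c / (T * E + 1) := by positivity
  obtain ⟨M, hM⟩ := exists_pow_lt_of_lt_one hε hq1
  refine ⟨M + 1, fun m hm => ?_⟩
  obtain ⟨s, rfl⟩ : ∃ s, m = s + 1 := ⟨m - 1, by omega⟩
  have hsM : M ≤ s := by omega
  have key : ∑ l, a l * (C ^ (s + 1)) l j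
      = S * mn (s + 1) + ∑ l, (a l * v l) * (f (s + 1) l - mn (s + 1)) := by
    have e0 : ∀ l, a l * (C ^ (s + 1)) l j = (a l * v l) * f (s + 1) l := by
      intro l
      rw [hfdef]; simp only
      rw [mul_assoc, ← mul_div_assoc, mul_div_cancel_left₀ _ (hv l).ne']
    rw [Finset.sum_congr rfl fun l _ => e0 l]
    have e1 : ∑ l, (a l * v l) * (f (s + 1) l - mn (s + 1))
        = (∑ l, (a l * v l) * f (s + 1) l) - S * mn (s + 1) := by
      rw [← hsum, Finset.sum_mul, ← Finset.sum_sub_distrib]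
      exact Finset.sum_congr rfl fun l _ => by ring
    rw [e1]; ring
  have hbd : ∀ l : Fin n, -(|a l| * v l * (q ^ s * E)) ≤ (a l * v l) * (f (s + 1) l - mn (s + 1)) := by
    intro l
    have h1 : 0 ≤ f (s + 1) l - mn (s + 1) := by linarith [hlef (s + 1) l]
    have h2 : f (s + 1) l - mn (s + 1) ≤ q ^ s * E := by
      have := hfle (s + 1) l
      have := hosc s
      linarith
    have hxw : (-(|a l| * v l)) ≤ a l * v l := by
      have := mul_le_mul_of_nonneg_right (neg_abs_le (a l)) (hv l).le
      linarith
    have k1 := mul_le_mul_of_nonneg_right hxw h1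
    have k2 := mul_le_mul_of_nonneg_left h2 (mul_nonneg (abs_nonneg (a l)) (hv l).le)
    nlinarith
  have hsum2 : -(T * (q ^ s * E)) ≤ ∑ l, (a l * v l) * (f (s + 1) l - mn (s + 1)) := by
    have e : T * (q ^ s * E) = ∑ l, |a l| * v l * (q ^ s * E) := by
      rw [hTdef, Finset.sum_mul]
    rw [e, ← Finset.sum_neg_distrib]
    exact Finset.sum_le_sum fun l _ => hbd l
  have hmnc : c ≤ mn (s + 1) := Finset.le_inf' _ _ fun l _ => hlow (s + 1) (by omega) l
  have hqs : q ^ s ≤ q ^ M := pow_le_pow_of_le_one hq0 hq1.le hsM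
  have hfin : T * (q ^ s * E) < S * c := by
    have hTE : (0:ℝ) < T * E + 1 := by positivity
    have e : T * (q ^ s * E) = (T * E) * q ^ s := by ring
    have h1 : (T * E) * q ^ s ≤ (T * E + 1) * q ^ s :=
      mul_le_mul_of_nonneg_right (by linarith) (pow_nonneg hq0 s)
    have h2 : (T * E + 1) * q ^ s ≤ (T * E + 1) * q ^ M :=
      mul_le_mul_of_nonneg_left hqs hTE.le
    have h3 : (T * E + 1) * q ^ M < (T * E + 1) * (S * c / (T * E + 1)) :=
      mul_lt_mul_of_pos_left hM hTE
    have h4 : (T * E + 1) * (S * c / (T * E + 1)) = S * c :=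
      mul_div_cancel₀ _ hTE.ne'
    rw [e]
    calc (T * E) * q ^ s ≤ (T * E + 1) * q ^ s := h1
      _ ≤ (T * E + 1) * q ^ M := h2
      _ < (T * E + 1) * (S * c / (T * E + 1)) := h3
      _ = S * c := h4
  have hSmn : S * c ≤ S * mn (s + 1) := mul_le_mul_of_nonneg_left hmnc hS.le
  rw [key]
  linarith


/-- if `A` is eventually positive and `X` is a real `p`th-root of
`A` such that both `X` and `Xᵀ` have the strong Perron-Frobenius property, then
`X` is eventually positive. -/
theorem stmt_13 (n p : ℕ) (A X : Matrix (Fin n) (Fin n) ℝ)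
    (hA : EvPos A) (hX : X ^ p = A) (h1 : StrongPF X) (h2 : StrongPF Xᵀ) :
    EvPos X := by
  rcases Nat.eq_zero_or_pos n with hn | hn
  · subst hn; exact ⟨0, fun k _ i j => i.elim0⟩
  obtain ⟨ρ, hρ, -, -, v, hv, hXv⟩ := h1
  rcases Nat.eq_zero_or_pos p with hp | hp
  · -- degenerate case p = 0, so A = 1
    subst hp
    rcases lt_or_ge n 2 with hn2 | hn2
    · -- n = 1
      have hn1 : n = 1 := by omega
      subst hn1
      refine ⟨0, fun k _ i j => ?_⟩
      have h : (X ^ k) i 0 * v 0 = ρ ^ k * v i := by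
        simpa [Matrix.mulVec, dotProduct, Fin.sum_univ_one] using
          congrFun (pow_mulVec_eig X v ρ hXv k) i
      have hj : j = 0 := Subsingleton.elim _ _
      rw [hj]
      nlinarith [pow_pos hρ k, hv i, hv 0]
    · -- n ≥ 2 : contradiction with eventual positivity of the identity
      exfalso
      obtain ⟨N, hN⟩ := hA
      have h1 := hN N le_rfl ⟨0, by omega⟩ ⟨1, by omega⟩
      rw [← hX, pow_zero, one_pow] at h1
      rw [Matrix.one_apply_ne (by simp [Fin.ext_iff])] at h1
      exact lt_irrefl 0 h1
  -- main case
  obtain ⟨N₀, hN₀⟩ := hA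
  set N : ℕ := N₀ + 1 with hNdef
  have hAN : ∀ i j, 0 < (A ^ N) i j := hN₀ N (by omega)
  have hpN : 0 < p * N := Nat.mul_pos hp (by omega)
  have hXpN : X ^ (p * N) = A ^ N := by rw [pow_mul, hX]
  have hApN : (A ^ N).mulVec v = ρ ^ (p * N) • v := by
    rw [← hXpN]; exact pow_mulVec_eig X v ρ hXv _
  have hρpN : 0 < ρ ^ (p * N) := pow_pos hρ _
  set C : Matrix (Fin n) (Fin n) ℝ := (ρ ^ (p * N))⁻¹ • A ^ N with hCdef
  have hCpos : ∀ i j, 0 < C i j := by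
    intro i j
    have h := hAN i j
    rw [hCdef]
    simp only [Matrix.smul_apply, smul_eq_mul]
    exact mul_pos (inv_pos.2 hρpN) h
  have hCv : C.mulVec v = v := by
    rw [hCdef, Matrix.smul_mulVec, hApN, smul_smul,
      inv_mul_cancel₀ hρpN.ne', one_smul]
  have hANC : A ^ N = ρ ^ (p * N) • C := by
    rw [hCdef, smul_smul, mul_inv_cancel₀ hρpN.ne', one_smul]
  have key : ∀ t : Fin (p * N) × Fin n × Fin n,
      ∃ M : ℕ, ∀ m, M ≤ m → 0 < (X ^ ((t.1 : ℕ)) * C ^ m) t.2.1 t.2.2 := by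
    rintro ⟨r, i, j⟩
    have hXr : ∑ l, (X ^ (r : ℕ)) i l * v l = ρ ^ (r : ℕ) * v i := by
      simpa [Matrix.mulVec, dotProduct] using
        congrFun (pow_mulVec_eig X v ρ hXv (r : ℕ)) i
    obtain ⟨M, hM⟩ := core hn C v hCpos hv hCv (fun l => (X ^ (r : ℕ)) i l) j
      (ρ ^ (r : ℕ) * v i) (mul_pos (pow_pos hρ _) (hv i)) hXr
    refine ⟨M, fun m hm => ?_⟩
    rw [Matrix.mul_apply]
    exact hM m hm
  choose g hg using key
  refine ⟨(Finset.univ.sup g) * (p * N), fun k hk i j => ?_⟩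
  have hr : k % (p * N) < p * N := Nat.mod_lt _ hpN
  have hm : Finset.univ.sup g ≤ k / (p * N) := (Nat.le_div_iff_mul_le hpN).2 hk
  have hgm := hg (⟨k % (p * N), hr⟩, i, j) (k / (p * N))
    (le_trans (Finset.le_sup (Finset.mem_univ _)) hm)
  have hk' : k = k % (p * N) + (p * N) * (k / (p * N)) := (Nat.mod_add_div k (p * N)).symm
  have e1 : X ^ k
      = X ^ (k % (p * N)) * ((ρ ^ (p * N)) ^ (k / (p * N)) • C ^ (k / (p * N))) := by
    conv_lhs => rw [hk']
    rw [pow_add, pow_mul, hXpN, hANC, smul_pow]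
  rw [e1, Matrix.mul_smul, Matrix.smul_apply, smul_eq_mul]
  exact mul_pos (pow_pos hρpN _) hgm
end

section
/- Let A be a real n×n matrix with the strong Perron-Frobenius property with spectral radius ρ, and let X be a real matrix with X^p = A such that the eigenvalue of X whose pth power is ρ equals the real positive pth root ρ^{1/p}, with the same (positive) eigenvector. Then ρ^{1/p} is the spectral radius of X, it is a simple eigenvalue of X, and it strictly dominates in modulus every other eigenvalue of X; i.e., X has the strong Perron-Frobenius property. -/
open Matrix

section AuxPF

open Polynomial

private lemma auxPF_dvd {K : Type*} [Field K] {n : ℕ} (M : Matrix (Fin n) (Fin n) K) (p : ℕ) :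
    M.charpoly ∣ (Matrix.charpoly (M ^ p)).comp (Polynomial.X ^ p) := by
  classical
  set a : Matrix (Fin n) (Fin n) K[X] := Matrix.scalar (Fin n) (Polynomial.X : K[X]) with ha
  set b : Matrix (Fin n) (Fin n) K[X] := (Polynomial.C : K →+* K[X]).mapMatrix M with hb
  have hcomm : Commute a b := Matrix.scalar_commute _ (fun r' => Commute.all _ _) _
  have hdvd : a ^ p - b ^ p = (∑ i ∈ Finset.range p, a ^ i * b ^ (p - 1 - i)) * (a - b) :=
    (hcomm.geom_sum₂_mul p).symm
  have hφ : (Matrix.charpoly (M ^ p)).comp (Polynomial.X ^ p)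
      = ((Polynomial.eval₂RingHom Polynomial.C ((Polynomial.X : K[X]) ^ p)).mapMatrix
          (charmatrix (M ^ p))).det := by
    rw [Matrix.charpoly, Polynomial.comp, ← Polynomial.coe_eval₂RingHom]
    exact RingHom.map_det _ _
  have hmapped : (Polynomial.eval₂RingHom Polynomial.C ((Polynomial.X : K[X]) ^ p)).mapMatrix
      (charmatrix (M ^ p)) = a ^ p - b ^ p := by
    have h1 : a ^ p = Matrix.scalar (Fin n) ((Polynomial.X : K[X]) ^ p) := (map_pow _ _ _).symm
    have h2 : b ^ p = (Polynomial.C : K →+* K[X]).mapMatrix (M ^ p) := (map_pow _ _ _).symm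
    rw [h1, h2]
    ext i j
    by_cases h : i = j <;>
      simp [charmatrix_apply, Matrix.scalar, Matrix.diagonal_apply, h, RingHom.mapMatrix_apply]
  have hlast : (Matrix.charpoly (M ^ p)).comp (Polynomial.X ^ p)
      = (∑ i ∈ Finset.range p, a ^ i * b ^ (p - 1 - i)).det * M.charpoly := by
    rw [hφ, hmapped, hdvd, Matrix.det_mul]
    rfl
  exact Dvd.intro_left _ hlast.symm

private lemma auxPF_mult {p : ℕ} (hp : 1 ≤ p) (q : ℝ[X]) (hq : q ≠ 0) {ρ r : ℝ} (hr : 0 < r)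
    (hrp : r ^ p = ρ) (hsimple : q.rootMultiplicity ρ = 1) :
    (q.comp (Polynomial.X ^ p)).rootMultiplicity r = 1 := by
  obtain ⟨T, hT⟩ : (Polynomial.X - Polynomial.C ρ) ∣ q := by
    have := Polynomial.pow_rootMultiplicity_dvd q ρ
    rwa [hsimple, pow_one] at this
  have hTρ : T.eval ρ ≠ 0 := by
    intro h
    have h2 : (Polynomial.X - Polynomial.C ρ) ^ 2 ∣ q := by
      obtain ⟨U, hU⟩ := (Polynomial.dvd_iff_isRoot).2 h
      exact ⟨U, by rw [hT, hU]; ring⟩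
    have := (Polynomial.le_rootMultiplicity_iff hq).2 h2
    omega
  set G : ℝ[X] := ∑ i ∈ Finset.range p, Polynomial.X ^ i * (Polynomial.C r) ^ (p - 1 - i) with hGdef
  have hG : G * (Polynomial.X - Polynomial.C r) = Polynomial.X ^ p - (Polynomial.C r) ^ p :=
    geom_sum₂_mul _ _ p
  have hfact : q.comp (Polynomial.X ^ p)
      = G * (Polynomial.X - Polynomial.C r) * T.comp (Polynomial.X ^ p) := by
    rw [hT, Polynomial.mul_comp, Polynomial.sub_comp, Polynomial.X_comp, Polynomial.C_comp, hG]
    rw [← map_pow, hrp]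
  have hGr : G.eval r = p * r ^ (p - 1) := by
    rw [hGdef, Polynomial.eval_finset_sum]
    have : ∀ i ∈ Finset.range p,
        ((Polynomial.X : ℝ[X]) ^ i * (Polynomial.C r) ^ (p - 1 - i)).eval r = r ^ (p - 1) := by
      intro i hi
      simp only [Polynomial.eval_mul, Polynomial.eval_pow, Polynomial.eval_X, Polynomial.eval_C]
      rw [← pow_add]
      congr 1
      have := Finset.mem_range.mp hi
      omega
    rw [Finset.sum_congr rfl this, Finset.sum_const, Finset.card_range, nsmul_eq_mul]
  have hGr0 : G.eval r ≠ 0 := by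
    rw [hGr]
    positivity
  have hTr0 : (T.comp (Polynomial.X ^ p)).eval r ≠ 0 := by
    rw [Polynomial.eval_comp, Polynomial.eval_pow, Polynomial.eval_X, hrp]
    exact hTρ
  have hG0 : G ≠ 0 := fun h => hGr0 (by rw [h]; simp)
  have hT0 : T.comp (Polynomial.X ^ p) ≠ 0 := fun h => hTr0 (by rw [h]; simp)
  have hX0 : (Polynomial.X - Polynomial.C r) ≠ 0 := Polynomial.X_sub_C_ne_zero r
  have e1 : Polynomial.rootMultiplicity r G = 0 :=
    Polynomial.rootMultiplicity_eq_zero (fun h => hGr0 h)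
  have e2 : Polynomial.rootMultiplicity r (T.comp (Polynomial.X ^ p)) = 0 :=
    Polynomial.rootMultiplicity_eq_zero (fun h => hTr0 h)
  have e3 : Polynomial.rootMultiplicity r (Polynomial.X - Polynomial.C r) = 1 :=
    Polynomial.rootMultiplicity_X_sub_C_self
  rw [hfact, Polynomial.rootMultiplicity_mul (mul_ne_zero (mul_ne_zero hG0 hX0) hT0),
    Polynomial.rootMultiplicity_mul (mul_ne_zero hG0 hX0), e1, e2, e3]

private lemma auxPF_end {K V : Type*} [Field K] [AddCommGroup V] [Module K V]
    [FiniteDimensional K V]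
    (f : Module.End K V) (ρ : K) (w : Fin 2 → V) (hw : ∀ i, f (w i) = ρ • w i)
    (hind : LinearIndependent K w) :
    (Polynomial.X - Polynomial.C ρ) ^ 2 ∣ f.charpoly := by
  classical
  let b : Module.Basis (Fin 2 ⊕ Module.Basis.sumExtendIndex hind) K V := Module.Basis.sumExtend hind
  haveI : Finite (Fin 2 ⊕ Module.Basis.sumExtendIndex hind) := by
    haveI := FiniteDimensional.fintypeBasisIndex b
    infer_instance
  haveI : Finite (Module.Basis.sumExtendIndex hind) :=
    Finite.of_injective (Sum.inr : _ → Fin 2 ⊕ Module.Basis.sumExtendIndex hind) Sum.inr_injective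
  haveI : Fintype (Module.Basis.sumExtendIndex hind) := Fintype.ofFinite _
  have hb : ∀ i : Fin 2, b (Sum.inl i) = w i := by
    intro i
    simp [b, Module.Basis.sumExtend, Module.Basis.reindex_apply, Equiv.sumCongr,
      Module.Basis.extend_apply_self, Equiv.Set.sumDiffSubset_apply_inl, Equiv.ofInjective, Equiv.ofLeftInverse]
    rfl
  set N := LinearMap.toMatrix b b f with hN
  have hrepr : ∀ (i : Fin 2) x, N x (Sum.inl i) = (Finsupp.single (Sum.inl i : Fin 2 ⊕ _) ρ) x := by
    intro i x
    rw [hN, LinearMap.toMatrix_apply, hb, hw, _root_.map_smul, ← hb i, b.repr_self]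
    simp [Finsupp.smul_single]
  have h21 : N.toBlocks₂₁ = 0 := by
    ext j i
    simp only [Matrix.toBlocks₂₁, Matrix.of_apply, Matrix.zero_apply]
    rw [hrepr i (Sum.inr j), Finsupp.single_apply]
    simp
  have h11 : N.toBlocks₁₁ = ρ • (1 : Matrix (Fin 2) (Fin 2) K) := by
    ext i' i
    simp only [Matrix.toBlocks₁₁, Matrix.of_apply]
    rw [hrepr i (Sum.inl i'), Finsupp.single_apply]
    rcases eq_or_ne i i' with h | h
    · subst h; simp [Matrix.one_apply]
    · simp [h, Matrix.one_apply, h.symm]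
  have hblocks : N = Matrix.fromBlocks (ρ • (1 : Matrix (Fin 2) (Fin 2) K)) N.toBlocks₁₂
      0 N.toBlocks₂₂ := by
    rw [← h11, ← h21, Matrix.fromBlocks_toBlocks]
  have hcp : f.charpoly = N.charpoly := (LinearMap.charpoly_toMatrix f b).symm
  have hscal : (ρ • (1 : Matrix (Fin 2) (Fin 2) K)).charpoly
      = (Polynomial.X - Polynomial.C ρ) ^ 2 := by
    have hd : (ρ • (1 : Matrix (Fin 2) (Fin 2) K)) = Matrix.diagonal (fun _ => ρ) := by
      ext i j
      by_cases h : i = j <;> simp [Matrix.diagonal_apply, h, Matrix.one_apply]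
    rw [hd, Matrix.charpoly, charmatrix]
    have : Matrix.scalar (Fin 2) (Polynomial.X : K[X])
        - (Polynomial.C : K →+* K[X]).mapMatrix (Matrix.diagonal fun _ => ρ)
        = Matrix.diagonal (fun _ : Fin 2 => (Polynomial.X : K[X]) - Polynomial.C ρ) := by
      ext i j
      by_cases h : i = j <;>
        simp [Matrix.scalar, Matrix.diagonal_apply, h, RingHom.mapMatrix_apply]
    rw [this, Matrix.det_diagonal, Finset.prod_const]
    simp
  rw [hcp, hblocks, Matrix.charpoly_fromBlocks_zero₂₁, hscal]
  exact Dvd.intro _ rfl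

private lemma auxPF_two {K : Type*} [Field K] {n : ℕ} (M : Matrix (Fin n) (Fin n) K) (ρ : K)
    (w : Fin 2 → Fin n → K) (hw : ∀ i, M.mulVec (w i) = ρ • w i)
    (hind : LinearIndependent K w) : 2 ≤ M.charpoly.rootMultiplicity ρ := by
  classical
  have hdvd : (Polynomial.X - Polynomial.C ρ) ^ 2 ∣ (Matrix.toLin' M).charpoly :=
    auxPF_end (Matrix.toLin' M) ρ w (fun i => by rw [Matrix.toLin'_apply, hw i]) hind
  have hcp : (Matrix.toLin' M).charpoly = M.charpoly := by
    rw [← LinearMap.charpoly_toMatrix (Matrix.toLin' M) (Pi.basisFun K (Fin n)),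
      LinearMap.toMatrix_eq_toMatrix', LinearMap.toMatrix'_toLin']
  rw [hcp] at hdvd
  exact (Polynomial.le_rootMultiplicity_iff (Matrix.charpoly_monic M).ne_zero).2 hdvd

private lemma auxPF_spec {K : Type*} [Field K] {n : ℕ} (M : Matrix (Fin n) (Fin n) K) (μ : K) :
    μ ∈ spectrum K M ↔ ∃ w : Fin n → K, w ≠ 0 ∧ M.mulVec w = μ • w := by
  classical
  rw [spectrum.mem_iff, Matrix.isUnit_iff_isUnit_det, isUnit_iff_ne_zero, not_not,
    ← Matrix.exists_mulVec_eq_zero_iff]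
  constructor
  · rintro ⟨w, hw0, hw⟩
    refine ⟨w, hw0, ?_⟩
    have : (μ • (1 : Matrix (Fin n) (Fin n) K) - M).mulVec w = 0 := by
      rw [← Algebra.algebraMap_eq_smul_one]
      exact hw
    rw [Matrix.sub_mulVec, Matrix.smul_mulVec, Matrix.one_mulVec, sub_eq_zero] at this
    exact this.symm
  · rintro ⟨w, hw0, hw⟩
    refine ⟨w, hw0, ?_⟩
    rw [Algebra.algebraMap_eq_smul_one, Matrix.sub_mulVec, Matrix.smul_mulVec,
      Matrix.one_mulVec, hw, sub_self]

private lemma auxPF_root {K : Type*} [Field K] {n : ℕ} (M : Matrix (Fin n) (Fin n) K) {μ : K}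
    {w : Fin n → K} (hw0 : w ≠ 0) (hw : M.mulVec w = μ • w) : M.charpoly.IsRoot μ := by
  classical
  have hdet : (μ • (1 : Matrix (Fin n) (Fin n) K) - M).det = 0 := by
    rw [← Matrix.exists_mulVec_eq_zero_iff]
    exact ⟨w, hw0, by rw [Matrix.sub_mulVec, Matrix.smul_mulVec, Matrix.one_mulVec, hw,
      sub_self]⟩
  have h := RingHom.map_det (Polynomial.evalRingHom μ)
    (Matrix.scalar (Fin n) Polynomial.X - (Polynomial.C : K →+* K[X]).mapMatrix M)
  simp only [Polynomial.coe_evalRingHom] at h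
  have : M.charpoly.eval μ = (μ • (1 : Matrix (Fin n) (Fin n) K) - M).det := by
    rw [Matrix.charpoly, Matrix.charmatrix, h]
    congr 1
    ext i j
    by_cases hij : i = j <;>
      simp [Matrix.scalar, Matrix.diagonal_apply, hij, RingHom.mapMatrix_apply,
        Matrix.one_apply, Polynomial.coe_evalRingHom]
  rw [Polynomial.IsRoot, this, hdet]

private lemma auxPF_pow {K : Type*} [CommRing K] {n : ℕ} (M : Matrix (Fin n) (Fin n) K) (μ : K)
    (w : Fin n → K) (hw : M.mulVec w = μ • w) (p : ℕ) : (M ^ p).mulVec w = μ ^ p • w := by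
  induction p with
  | zero => simp
  | succ k ih =>
    rw [pow_succ, ← Matrix.mulVec_mulVec, hw, Matrix.mulVec_smul, ih, smul_smul, pow_succ,
      mul_comm]

private lemma auxPF_mapvec {n : ℕ} (M : Matrix (Fin n) (Fin n) ℝ) (v : Fin n → ℝ) :
    (M.map Complex.ofReal).mulVec (fun i => ((v i : ℝ) : ℂ))
      = fun i => ((M.mulVec v i : ℝ) : ℂ) := by
  ext i
  simp [Matrix.mulVec, Matrix.map_apply, dotProduct]

end AuxPF

/-- let `A` be a real matrix with the strong Perron-Frobenius
property (spectral radius `ρ`: positive, algebraically simple, strictly dominant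
in modulus, with positive eigenvector `v`), and let `X` be a real `p`th-root of
`A` whose eigenvalue on the Perron eigenvector `v` is the real positive root
`ρ^{1/p}`.  Then `ρ^{1/p}` is a simple eigenvalue of `X` strictly dominating in
modulus every other eigenvalue of `X` (so it is the spectral radius of `X`), and
`X` has a positive eigenvector for it; i.e. `X` has the strong Perron-Frobenius
property. -/
theorem stmt_18 (n p : ℕ) (hp : 1 ≤ p) (A X : Matrix (Fin n) (Fin n) ℝ)
    (ρ : ℝ) (hρ : 0 < ρ)
    (hsimple : (Matrix.charpoly A).rootMultiplicity ρ = 1)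
    (hdom : ∀ μ : ℂ, μ ∈ spectrum ℂ (A.map Complex.ofReal) → μ ≠ (ρ : ℂ) →
      ‖μ‖ < ρ)
    (v : Fin n → ℝ) (hv : ∀ i, 0 < v i) (hAv : A.mulVec v = ρ • v)
    (hXp : X ^ p = A)
    (hXv : X.mulVec v = (ρ ^ ((1 : ℝ)/p)) • v) :
    0 < ρ ^ ((1 : ℝ)/p) ∧
    (Matrix.charpoly X).rootMultiplicity (ρ ^ ((1 : ℝ)/p)) = 1 ∧
    (∀ μ : ℂ, μ ∈ spectrum ℂ (X.map Complex.ofReal) → μ ≠ ((ρ ^ ((1 : ℝ)/p) : ℝ) : ℂ) →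
      ‖μ‖ < ρ ^ ((1 : ℝ)/p)) ∧
    ∃ w : Fin n → ℝ, (∀ i, 0 < w i) ∧ X.mulVec w = (ρ ^ ((1 : ℝ)/p)) • w := by
  classical
  set r : ℝ := ρ ^ ((1 : ℝ)/p) with hrdef
  have hpn : (p : ℝ) ≠ 0 := Nat.cast_ne_zero.mpr (by omega)
  have hr : 0 < r := Real.rpow_pos_of_pos hρ _
  have hrp : r ^ p = ρ := by
    rw [hrdef, ← Real.rpow_natCast (ρ ^ ((1 : ℝ)/p)) p, ← Real.rpow_mul hρ.le,
      one_div, inv_mul_cancel₀ hpn, Real.rpow_one]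
  -- n is positive
  have hn : 0 < n := by
    by_contra h
    push_neg at h
    interval_cases n
    have hA1 : A.charpoly = 1 := by
      rw [Matrix.charpoly, Matrix.det_isEmpty]
    rw [hA1, Polynomial.rootMultiplicity_eq_zero (by simp [Polynomial.IsRoot])] at hsimple
    omega
  have hv0 : v ≠ 0 := by
    intro h
    exact absurd (congrFun h ⟨0, hn⟩) (hv ⟨0, hn⟩).ne'
  have hXcp0 : X.charpoly ≠ 0 := (Matrix.charpoly_monic X).ne_zero
  -- Part 2: simplicity
  have hmult : X.charpoly.rootMultiplicity r = 1 := by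
    have hcompmult : ((A.charpoly).comp (Polynomial.X ^ p)).rootMultiplicity r = 1 :=
      auxPF_mult hp A.charpoly (Matrix.charpoly_monic A).ne_zero hr hrp hsimple
    have hcomp0 : (A.charpoly).comp (Polynomial.X ^ p) ≠ 0 := by
      intro h
      rw [h, Polynomial.rootMultiplicity_zero] at hcompmult
      omega
    have hdvd : X.charpoly ∣ (A.charpoly).comp (Polynomial.X ^ p) := by
      have := auxPF_dvd X p
      rwa [hXp] at this
    have hle : X.charpoly.rootMultiplicity r ≤ 1 := by
      rw [← hcompmult]
      exact (Polynomial.le_rootMultiplicity_iff hcomp0).2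
        (dvd_trans (Polynomial.pow_rootMultiplicity_dvd X.charpoly r) hdvd)
    have hge : 1 ≤ X.charpoly.rootMultiplicity r :=
      (Polynomial.rootMultiplicity_pos hXcp0).2 (auxPF_root X hv0 hXv)
    omega
  refine ⟨hr, hmult, ?_, ⟨v, hv, hXv⟩⟩
  -- Part 3: dominance
  intro μ hμ hμne
  set vc : Fin n → ℂ := fun i => ((v i : ℝ) : ℂ) with hvc
  have hvc0 : vc ≠ 0 := by
    intro h
    have := congrFun h ⟨0, hn⟩
    simp only [hvc, Pi.zero_apply, Complex.ofReal_eq_zero] at this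
    exact (hv ⟨0, hn⟩).ne' this
  have hXvc : (X.map Complex.ofReal).mulVec vc = (r : ℂ) • vc := by
    rw [hvc, auxPF_mapvec, hXv]
    ext i
    simp
  have hAvc : (A.map Complex.ofReal).mulVec vc = (ρ : ℂ) • vc := by
    rw [hvc, auxPF_mapvec, hAv]
    ext i
    simp
  obtain ⟨w, hw0, hw⟩ := (auxPF_spec (X.map Complex.ofReal) μ).1 hμ
  have hmap_pow : (X.map Complex.ofReal) ^ p = A.map Complex.ofReal := by
    have : (Complex.ofRealHom.mapMatrix X) ^ p = Complex.ofRealHom.mapMatrix (X ^ p) :=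
      (map_pow Complex.ofRealHom.mapMatrix X p).symm
    rw [hXp] at this
    exact this
  have hAw : (A.map Complex.ofReal).mulVec w = μ ^ p • w := by
    rw [← hmap_pow]
    exact auxPF_pow _ μ w hw p
  by_cases hcase : μ ^ p = (ρ : ℂ)
  · -- the case μ^p = ρ is impossible: it forces μ = r
    exfalso
    have hAw' : (A.map Complex.ofReal).mulVec w = (ρ : ℂ) • w := by rw [hAw, hcase]
    by_cases hli : LinearIndependent ℂ ![vc, w]
    · -- two independent eigenvectors contradict algebraic simplicity
      have h2 : 2 ≤ (A.map Complex.ofReal).charpoly.rootMultiplicity (ρ : ℂ) := by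
        refine auxPF_two (A.map Complex.ofReal) (ρ : ℂ) ![vc, w] ?_ hli
        intro i
        fin_cases i
        · simpa using hAvc
        · simpa using hAw'
      have hmap : (A.map Complex.ofReal).charpoly.rootMultiplicity (ρ : ℂ)
          = A.charpoly.rootMultiplicity ρ := by
        have h1 : (A.map Complex.ofReal).charpoly = A.charpoly.map Complex.ofRealHom :=
          Matrix.charpoly_map A Complex.ofRealHom
        rw [h1]
        exact (Polynomial.eq_rootMultiplicity_map (f := Complex.ofRealHom)
          (p := A.charpoly) Complex.ofReal_injective ρ).symm
      rw [hmap, hsimple] at h2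
      omega
    · -- w is a multiple of vc, hence μ = r
      rw [LinearIndependent.pair_iff' hvc0] at hli
      push_neg at hli
      obtain ⟨c, hc⟩ := hli
      have hc0 : c ≠ 0 := by
        intro h
        rw [h, zero_smul] at hc
        exact hw0 hc.symm
      have h1 : μ • w = (r : ℂ) • w := by
        rw [← hw, ← hc, Matrix.mulVec_smul, hXvc, smul_comm]
      have h2 : (μ - (r : ℂ)) • w = 0 := by
        rw [sub_smul, h1, sub_self]
      rcases smul_eq_zero.mp h2 with h | h
      · exact hμne (by rwa [sub_eq_zero] at h)
      · exact hw0 h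
  · -- the dominant case
    have hspec : μ ^ p ∈ spectrum ℂ (A.map Complex.ofReal) :=
      (auxPF_spec (A.map Complex.ofReal) (μ ^ p)).2 ⟨w, hw0, hAw⟩
    have habs : ‖μ ^ p‖ < ρ := hdom (μ ^ p) hspec hcase
    rw [norm_pow] at habs
    have : ‖μ‖ ^ p < r ^ p := by rwa [hrp]
    exact lt_of_pow_lt_pow_left₀ p hr.le this
end
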